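/- For every nonzero integer N and every Schwartz function ψ ∈ 𝒮(ℝ, ℂ), the Weil–Brezin–Zak transform is an L²-isometry onto the fundamental domain: ∫₀¹∫₀¹ |(W_N ψ)(x,y)|² dx dy = ∫_ℝ |ψ(x)|² dx. -/

import Mathlib

open MeasureTheory Set Complex
open scoped NNReal ENNReal

noncomputable section

/-- The Weil–Brezin–Zak transform `(W_N ψ)(x,y) = Σ_{k∈ℤ} ψ(x+k) e^{−2πiNky}`. -/
def WBZ (N : ℤ) (ψ : ℝ → ℂ) : ℝ × ℝ → ℂ := fun p =>
  ∑' k : ℤ, ψ (p.1 + k) * Complex.exp (-(2 * (Real.pi : ℂ) * Complex.I * (N : ℂ) * (k : ℂ) * (p.2 : ℂ)))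

lemma wbz_summable_aux : Summable (fun k : ℤ => ((1:ℝ) + (k:ℝ)^2)⁻¹) := by
  have h : Summable (fun k : ℤ => (1:ℝ) / (k:ℝ)^2) :=
    (Real.summable_one_div_int_pow (p := 2)).mpr one_lt_two
  apply Summable.of_norm_bounded_eventually h
  have : {k : ℤ | ¬ ‖((1:ℝ) + (k:ℝ)^2)⁻¹‖ ≤ 1 / (k:ℝ)^2} ⊆ {0} := by
    intro k hk
    simp only [mem_setOf_eq, not_le] at hk
    by_contra h0
    apply absurd hk
    push_neg
    rw [Real.norm_eq_abs, abs_of_pos (by positivity), one_div]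
    have hk0 : (k:ℝ) ≠ 0 := Int.cast_ne_zero.mpr (by simpa using h0)
    have : (0:ℝ) < (k:ℝ)^2 := by positivity
    apply inv_anti₀ this
    nlinarith [sq_nonneg (k:ℝ)]
  exact Filter.eventually_cofinite.mpr ((Set.finite_singleton 0).subset this)

lemma wbz_bound (ψ : SchwartzMap ℝ ℂ) : ∃ C, 0 ≤ C ∧ ∀ x ∈ Icc (0:ℝ) 1, ∀ k : ℤ,
    (1 + (k:ℝ)^2) * ‖ψ (x + k)‖ ≤ C := by
  obtain ⟨C0, hC0p, hC0⟩ := ψ.decay 2 0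
  obtain ⟨C1, hC1p, hC1⟩ := ψ.decay 0 0
  obtain ⟨C2, hC2p, hC2⟩ := ψ.decay 1 0
  refine ⟨2*C1 + 2*C2 + C0, by positivity, fun x hx k => ?_⟩
  set t := x + (k:ℝ) with ht
  have h0 : ‖ψ t‖ ≤ C1 := by simpa [norm_iteratedFDeriv_zero] using hC1 t
  have h1 : ‖t‖ * ‖ψ t‖ ≤ C2 := by simpa [norm_iteratedFDeriv_zero] using hC2 t
  have h2 : ‖t‖^2 * ‖ψ t‖ ≤ C0 := by simpa [norm_iteratedFDeriv_zero] using hC0 t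
  have hk : |(k:ℝ)| ≤ 1 + ‖t‖ := by
    have h3 : |(k:ℝ)| ≤ |t| + |x| := by
      have h4 : (k:ℝ) = t - x := by rw [ht]; ring
      rw [h4]; exact abs_sub _ _
    have hx1 : |x| ≤ 1 := abs_le.mpr ⟨by linarith [hx.1], hx.2⟩
    rw [Real.norm_eq_abs]; linarith
  have hk2 : (k:ℝ)^2 ≤ (1 + ‖t‖)^2 := by
    rw [← _root_.sq_abs (k:ℝ)]
    exact pow_le_pow_left₀ (abs_nonneg _) hk 2
  have hψ : 0 ≤ ‖ψ t‖ := norm_nonneg _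
  have hT : 0 ≤ ‖t‖ := norm_nonneg _
  nlinarith [hk2, h0, h1, h2]

lemma exp_term_norm (c : ℝ) : ‖Complex.exp (-(2 * (Real.pi:ℂ) * Complex.I * (c:ℂ)))‖ = 1 := by
  rw [Complex.norm_exp]
  have : (-(2 * (Real.pi:ℂ) * Complex.I * (c:ℂ))).re = 0 := by simp
  rw [this, Real.exp_zero]

lemma wbz_exp_norm (N k : ℤ) (y : ℝ) :
    ‖Complex.exp (-(2 * (Real.pi:ℂ) * Complex.I * (N:ℂ) * (k:ℂ) * (y:ℂ)))‖ = 1 := by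
  have : -(2 * (Real.pi:ℂ) * Complex.I * (N:ℂ) * (k:ℂ) * (y:ℂ))
      = -(2 * (Real.pi:ℂ) * Complex.I * ((N * k * y : ℝ) : ℂ)) := by push_cast; ring
  rw [this]; exact exp_term_norm _

lemma ortho (N : ℤ) (hN : N ≠ 0) (k l : ℤ) :
    ∫ y in Ioc (0:ℝ) 1,
      Complex.exp (-(2 * (Real.pi:ℂ) * Complex.I * (N:ℂ) * (k:ℂ) * (y:ℂ)))
        * (starRingEnd ℂ) (Complex.exp (-(2 * (Real.pi:ℂ) * Complex.I * (N:ℂ) * (l:ℂ) * (y:ℂ))))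
      = if k = l then 1 else 0 := by
  have hrw : ∀ y : ℝ,
      Complex.exp (-(2 * (Real.pi:ℂ) * Complex.I * (N:ℂ) * (k:ℂ) * (y:ℂ)))
        * (starRingEnd ℂ) (Complex.exp (-(2 * (Real.pi:ℂ) * Complex.I * (N:ℂ) * (l:ℂ) * (y:ℂ))))
      = Complex.exp ((-(2 * (Real.pi:ℂ) * Complex.I * (N:ℂ) * ((k:ℂ) - (l:ℂ)))) * (y:ℂ)) := by
    intro y
    rw [← Complex.exp_conj, ← Complex.exp_add]
    congr 1
    have h1 : (starRingEnd ℂ) ((N:ℂ)) = (N:ℂ) := by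
      rw [← Complex.ofReal_intCast, Complex.conj_ofReal]
    have h2 : (starRingEnd ℂ) ((l:ℂ)) = (l:ℂ) := by
      rw [← Complex.ofReal_intCast, Complex.conj_ofReal]
    simp only [map_neg, map_mul, Complex.conj_I, Complex.conj_ofReal, map_ofNat, h1, h2]
    ring
  simp_rw [hrw]
  rcases eq_or_ne k l with h | h
  · subst h
    simp only [sub_self, mul_zero, zero_mul, Complex.exp_zero, if_true]
    simp [Measure.restrict_apply]
  · rw [if_neg h]
    have hc : (-(2 * (Real.pi:ℂ) * Complex.I * (N:ℂ) * ((k:ℂ) - (l:ℂ)))) ≠ 0 := by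
      simp only [neg_ne_zero, mul_ne_zero_iff]
      refine ⟨⟨⟨⟨by norm_num, ?_⟩, Complex.I_ne_zero⟩, ?_⟩, ?_⟩
      · exact_mod_cast Real.pi_ne_zero
      · exact_mod_cast hN
      · rw [sub_ne_zero]; exact_mod_cast h
    rw [← intervalIntegral.integral_of_le (by norm_num : (0:ℝ) ≤ 1),
      integral_exp_mul_complex hc]
    have h1 : (-(2 * (Real.pi:ℂ) * Complex.I * (N:ℂ) * ((k:ℂ) - (l:ℂ)))) * (1:ℝ)
        = ((-(N * (k - l)) : ℤ) : ℂ) * (2 * Real.pi * Complex.I) := by push_cast; ring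
    have h0 : (-(2 * (Real.pi:ℂ) * Complex.I * (N:ℂ) * ((k:ℂ) - (l:ℂ)))) * (0:ℝ) = 0 := by
      push_cast; ring
    rw [h1, h0, Complex.exp_int_mul_two_pi_mul_I, Complex.exp_zero, sub_self, zero_div]

lemma parseval (N : ℤ) (hN : N ≠ 0) (a : ℤ → ℂ) (ha : Summable fun k => ‖a k‖) :
    ∫ y in Ioc (0:ℝ) 1,
      ‖∑' k : ℤ, a k * Complex.exp (-(2 * (Real.pi:ℂ) * Complex.I * (N:ℂ) * (k:ℂ) * (y:ℂ)))‖^2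
      = ∑' k : ℤ, ‖a k‖^2 := by
  set e : ℤ → ℝ → ℂ := fun k y =>
    Complex.exp (-(2 * (Real.pi:ℂ) * Complex.I * (N:ℂ) * (k:ℂ) * (y:ℂ))) with he
  have hnorme : ∀ k y, ‖e k y‖ = 1 := fun k y => wbz_exp_norm N k y
  have hsum : ∀ y : ℝ, Summable fun k => ‖a k * e k y‖ := by
    intro y
    simpa only [norm_mul, hnorme, mul_one] using ha
  have hsumconj : ∀ y : ℝ, Summable fun k => ‖(starRingEnd ℂ) (a k * e k y)‖ := by
    intro y
    simpa only [RCLike.norm_conj] using hsum y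
  have key : ∀ y : ℝ,
      ((‖∑' k : ℤ, a k * e k y‖^2 : ℝ) : ℂ)
      = ∑' p : ℤ × ℤ, (a p.1 * e p.1 y) * (starRingEnd ℂ) (a p.2 * e p.2 y) := by
    intro y
    rw [← tsum_mul_tsum_of_summable_norm (hsum y) (hsumconj y)]
    have hconj : ∑' k : ℤ, (starRingEnd ℂ) (a k * e k y)
        = (starRingEnd ℂ) (∑' k : ℤ, a k * e k y) := (RCLike.conjCLE.map_tsum).symm
    rw [hconj, Complex.mul_conj, Complex.normSq_eq_norm_sq]
  set f : ℤ × ℤ → ℝ → ℂ := fun p y => (a p.1 * e p.1 y) * (starRingEnd ℂ) (a p.2 * e p.2 y)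
    with hf
  have hmeas : ∀ p : ℤ × ℤ, AEStronglyMeasurable (f p) (volume.restrict (Ioc (0:ℝ) 1)) := by
    intro p
    apply Continuous.aestronglyMeasurable
    rw [hf, he]
    apply Continuous.mul
    · apply continuous_const.mul
      exact Complex.continuous_exp.comp (by fun_prop)
    · apply continuous_star.comp
      apply continuous_const.mul
      exact Complex.continuous_exp.comp (by fun_prop)
  have hnormf : ∀ p : ℤ × ℤ, ∀ y : ℝ, ‖f p y‖ = ‖a p.1‖ * ‖a p.2‖ := by
    intro p y
    rw [hf]
    simp only [norm_mul, RCLike.norm_conj, norm_mul, hnorme, mul_one]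
  have hlint : ∑' p : ℤ × ℤ, ∫⁻ y, ‖f p y‖₊ ∂(volume.restrict (Ioc (0:ℝ) 1)) ≠ ⊤ := by
    have hv : ∀ p : ℤ × ℤ, ∫⁻ y, ‖f p y‖₊ ∂(volume.restrict (Ioc (0:ℝ) 1))
        = (‖a p.1‖₊ * ‖a p.2‖₊ : ℝ≥0) := by
      intro p
      have : ∀ y : ℝ, (‖f p y‖₊ : ℝ≥0∞) = ((‖a p.1‖₊ * ‖a p.2‖₊ : ℝ≥0) : ℝ≥0∞) := by
        intro y
        congr 1
        ext
        push_cast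
        exact hnormf p y
      rw [lintegral_congr this, lintegral_const, Measure.restrict_apply_univ, Real.volume_Ioc]
      norm_num
    rw [tsum_congr hv, ENNReal.tsum_coe_ne_top_iff_summable]
    rw [← NNReal.summable_coe]
    have : Summable fun p : ℤ × ℤ => ‖a p.1‖ * ‖a p.2‖ :=
      ha.mul_of_nonneg ha (fun k => norm_nonneg _) (fun k => norm_nonneg _)
    simpa using this
  have hsw : ∫ y in Ioc (0:ℝ) 1, ∑' p : ℤ × ℤ, f p y
      = ∑' p : ℤ × ℤ, ∫ y in Ioc (0:ℝ) 1, f p y := integral_tsum hmeas hlint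
  have hival : ∀ p : ℤ × ℤ, ∫ y in Ioc (0:ℝ) 1, f p y
      = if p.1 = p.2 then a p.1 * (starRingEnd ℂ) (a p.2) else 0 := by
    intro p
    have : ∀ y : ℝ, f p y = a p.1 * (starRingEnd ℂ) (a p.2)
        * (e p.1 y * (starRingEnd ℂ) (e p.2 y)) := by
      intro y; rw [hf]; simp only [map_mul]; ring
    simp_rw [this]
    rw [MeasureTheory.integral_const_mul, he, ortho N hN p.1 p.2]
    split <;> simp
  have main : ((∫ y in Ioc (0:ℝ) 1, ‖∑' k : ℤ, a k * e k y‖^2 : ℝ) : ℂ)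
      = ∑' k : ℤ, ((‖a k‖^2 : ℝ) : ℂ) := by
    have h0 : ∫ y in Ioc (0:ℝ) 1, ((‖∑' k : ℤ, a k * e k y‖^2 : ℝ) : ℂ)
        = ((∫ y in Ioc (0:ℝ) 1, ‖∑' k : ℤ, a k * e k y‖^2 : ℝ) : ℂ) := integral_ofReal
    rw [← h0]
    calc ∫ y in Ioc (0:ℝ) 1, ((‖∑' k : ℤ, a k * e k y‖^2 : ℝ) : ℂ)
        = ∫ y in Ioc (0:ℝ) 1, ∑' p : ℤ × ℤ, f p y := by
          refine integral_congr_ae (Filter.Eventually.of_forall fun y => ?_)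
          simpa [hf, map_mul] using key y
      _ = ∑' p : ℤ × ℤ, ∫ y in Ioc (0:ℝ) 1, f p y := hsw
      _ = ∑' p : ℤ × ℤ, (if p.1 = p.2 then a p.1 * (starRingEnd ℂ) (a p.2) else 0) :=
          tsum_congr hival
      _ = ∑' k : ℤ, ((‖a k‖^2 : ℝ) : ℂ) := by
          rw [← Function.Injective.tsum_eq (f := fun p : ℤ × ℤ =>
            (if p.1 = p.2 then a p.1 * (starRingEnd ℂ) (a p.2) else 0))
            (g := fun k : ℤ => (k, k)) (fun i j h => by simpa using congrArg Prod.fst h) ?_]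
          · refine tsum_congr fun k => ?_
            simp only [if_true, Complex.mul_conj, Complex.normSq_eq_norm_sq]
          · intro p hp
            simp only [Function.mem_support, ne_eq] at hp
            by_cases h : p.1 = p.2
            · exact ⟨p.1, by rw [Prod.ext_iff]; exact ⟨rfl, h⟩⟩
            · exact absurd (if_neg h) hp
  exact Complex.ofReal_injective (main.trans (Complex.ofReal_tsum (fun k => ‖a k‖^2)).symm)

/-- The Weil–Brezin–Zak transform is an `L²`-isometry onto the fundamental domain:
`∫₀¹∫₀¹ |(W_N ψ)(x,y)|² dx dy = ∫_ℝ |ψ(x)|² dx`. -/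
theorem wbz_isometry (N : ℤ) (hN : N ≠ 0) (ψ : SchwartzMap ℝ ℂ) :
    (∫ y in (0:ℝ)..1, ∫ x in (0:ℝ)..1, ‖WBZ N ⇑ψ (x, y)‖ ^ 2) =
      ∫ x : ℝ, ‖ψ x‖ ^ 2 := by
  obtain ⟨C, hC0, hC⟩ := wbz_bound ψ
  have hb : ∀ x ∈ Icc (0:ℝ) 1, ∀ k : ℤ, ‖ψ (x + k)‖ ≤ C * ((1:ℝ) + (k:ℝ)^2)⁻¹ := by
    intro x hx k
    have hpos : (0:ℝ) < 1 + (k:ℝ)^2 := by positivity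
    rw [← div_eq_mul_inv, le_div_iff₀ hpos]
    linarith [hC x hx k]
  have hu : Summable (fun k : ℤ => C * ((1:ℝ) + (k:ℝ)^2)⁻¹) := wbz_summable_aux.mul_left C
  have hsummable : ∀ x ∈ Icc (0:ℝ) 1, Summable fun k : ℤ => ‖ψ (x + k)‖ := by
    intro x hx
    exact hu.of_nonneg_of_le (fun k => norm_nonneg _) (fun k => hb x hx k)
  -- continuity of the transform on [0,1] × ℝ
  have hcont : ContinuousOn (WBZ N ⇑ψ) (Icc (0:ℝ) 1 ×ˢ (univ : Set ℝ)) := by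
    apply continuousOn_tsum (u := fun k : ℤ => C * ((1:ℝ) + (k:ℝ)^2)⁻¹) _ hu
    · intro k p hp
      rw [norm_mul, wbz_exp_norm, mul_one]
      exact hb p.1 hp.1 k
    · intro k
      apply Continuous.continuousOn
      apply Continuous.mul
      · exact ψ.continuous.comp (by fun_prop)
      · exact Complex.continuous_exp.comp (by fun_prop)
  -- integrability on the square for Fubini
  have hint : Integrable (Function.uncurry fun y x => ‖WBZ N ⇑ψ (x, y)‖^2)
      ((volume.restrict (Ioc (0:ℝ) 1)).prod (volume.restrict (Ioc (0:ℝ) 1))) := by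
    rw [Measure.prod_restrict]
    apply IntegrableOn.mono_set (t := Icc (0:ℝ) 1 ×ˢ Icc (0:ℝ) 1)
    · apply ContinuousOn.integrableOn_compact (isCompact_Icc.prod isCompact_Icc)
      have hmap : MapsTo Prod.swap (Icc (0:ℝ) 1 ×ˢ Icc (0:ℝ) 1)
          (Icc (0:ℝ) 1 ×ˢ (univ : Set ℝ)) := by
        intro q hq
        exact ⟨hq.2, trivial⟩
      have h1 : ContinuousOn (fun q : ℝ × ℝ => WBZ N ⇑ψ (q.2, q.1))
          (Icc (0:ℝ) 1 ×ˢ Icc (0:ℝ) 1) :=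
        hcont.comp continuous_swap.continuousOn hmap
      exact (h1.norm).pow 2
    · exact Set.prod_mono Ioc_subset_Icc_self Ioc_subset_Icc_self
  rw [intervalIntegral.integral_of_le (zero_le_one)]
  have hinner : ∀ y : ℝ, (∫ x in (0:ℝ)..1, ‖WBZ N ⇑ψ (x, y)‖ ^ 2)
      = ∫ x in Ioc (0:ℝ) 1, ‖WBZ N ⇑ψ (x, y)‖ ^ 2 := fun y =>
    intervalIntegral.integral_of_le (zero_le_one)
  simp_rw [hinner]
  rw [MeasureTheory.integral_integral_swap hint]
  -- now: ∫ x in Ioc 0 1, ∫ y in Ioc 0 1, ‖W (x,y)‖² = ∫ ℝ ‖ψ‖²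
  have hpar : ∀ x ∈ Ioc (0:ℝ) 1,
      (∫ y in Ioc (0:ℝ) 1, ‖WBZ N ⇑ψ (x, y)‖ ^ 2) = ∑' k : ℤ, ‖ψ (x + k)‖^2 := by
    intro x hx
    exact parseval N hN (fun k => ψ (x + k)) (hsummable x (Ioc_subset_Icc_self hx))
  rw [setIntegral_congr_fun measurableSet_Ioc hpar]
  -- swap integral and sum
  have hswap2 : ∫ x in Ioc (0:ℝ) 1, ∑' k : ℤ, ‖ψ (x + k)‖^2
      = ∑' k : ℤ, ∫ x in Ioc (0:ℝ) 1, ‖ψ (x + k)‖^2 := by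
    apply integral_tsum
    · intro k
      apply Continuous.aestronglyMeasurable
      exact (ψ.continuous.comp (by fun_prop)).norm.pow 2
    · have hbd : ∀ k : ℤ, ∫⁻ x, ‖(‖ψ (x + k)‖^2 : ℝ)‖₊ ∂(volume.restrict (Ioc (0:ℝ) 1))
          ≤ ENNReal.ofReal ((C * ((1:ℝ) + (k:ℝ)^2)⁻¹)^2) := by
        intro k
        have : ∀ x ∈ Ioc (0:ℝ) 1, (‖(‖ψ (x + k)‖^2 : ℝ)‖₊ : ℝ≥0∞)
            ≤ ENNReal.ofReal ((C * ((1:ℝ) + (k:ℝ)^2)⁻¹)^2) := by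
          intro x hx
          rw [← ENNReal.ofReal_coe_nnreal]
          apply ENNReal.ofReal_le_ofReal
          have h1 := hb x (Ioc_subset_Icc_self hx) k
          have h2 : (0:ℝ) ≤ ‖ψ (x + k)‖ := norm_nonneg _
          simp only [coe_nnnorm, Real.norm_eq_abs,
            _root_.abs_of_nonneg (by positivity : (0:ℝ) ≤ ‖ψ (x+(k:ℝ))‖^2)]
          exact pow_le_pow_left₀ h2 h1 2
        calc ∫⁻ x, ‖(‖ψ (x + k)‖^2 : ℝ)‖₊ ∂(volume.restrict (Ioc (0:ℝ) 1))
            ≤ ∫⁻ _, ENNReal.ofReal ((C * ((1:ℝ) + (k:ℝ)^2)⁻¹)^2)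
                ∂(volume.restrict (Ioc (0:ℝ) 1)) := by
              apply lintegral_mono_ae
              filter_upwards [ae_restrict_mem measurableSet_Ioc] with x hx
              exact this x hx
          _ = ENNReal.ofReal ((C * ((1:ℝ) + (k:ℝ)^2)⁻¹)^2) := by
              rw [lintegral_const, Measure.restrict_apply_univ, Real.volume_Ioc]
              norm_num
      apply ne_top_of_le_ne_top _ (ENNReal.tsum_le_tsum hbd)
      have hsq : Summable (fun k : ℤ => (C * ((1:ℝ) + (k:ℝ)^2)⁻¹)^2) := by
        apply (hu.mul_left C).of_nonneg_of_le (fun k => by positivity)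
        intro k
        have h1 : ((1:ℝ) + (k:ℝ)^2)⁻¹ ≤ 1 := by
          rw [inv_le_one_iff₀]
          right; nlinarith [sq_nonneg (k:ℝ)]
        have h2 : (0:ℝ) ≤ C * ((1:ℝ) + (k:ℝ)^2)⁻¹ := by positivity
        have h3 : C * ((1:ℝ) + (k:ℝ)^2)⁻¹ ≤ C := by
          calc C * ((1:ℝ) + (k:ℝ)^2)⁻¹ ≤ C * 1 := mul_le_mul_of_nonneg_left h1 hC0
            _ = C := mul_one C
        calc (C * ((1:ℝ) + (k:ℝ)^2)⁻¹)^2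
            = (C * ((1:ℝ) + (k:ℝ)^2)⁻¹) * (C * ((1:ℝ) + (k:ℝ)^2)⁻¹) := sq _
          _ ≤ C * (C * ((1:ℝ) + (k:ℝ)^2)⁻¹) := mul_le_mul_of_nonneg_right h3 h2
      rw [← ENNReal.ofReal_tsum_of_nonneg (fun k => by positivity) hsq]
      exact ENNReal.ofReal_ne_top
  rw [hswap2]
  have htrans : ∀ k : ℤ, (∫ x in Ioc (0:ℝ) 1, ‖ψ (x + k)‖^2)
      = ∫ x in Ioc (k:ℝ) (k+1), ‖ψ x‖^2 := by
    intro k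
    rw [← intervalIntegral.integral_of_le zero_le_one,
      ← intervalIntegral.integral_of_le (by linarith : (k:ℝ) ≤ (k:ℝ)+1)]
    have h := intervalIntegral.integral_comp_add_right (a := (0:ℝ)) (b := 1)
      (fun t => ‖ψ t‖^2) (k:ℝ)
    simpa [zero_add, add_comm] using h
  rw [tsum_congr htrans]
  -- integrability of ‖ψ‖² on ℝ
  have hψint : Integrable (fun x : ℝ => ‖ψ x‖^2) := by
    obtain ⟨C1, hC1p, hC1⟩ := ψ.decay 0 0
    have hC1' : ∀ x : ℝ, ‖ψ x‖ ≤ C1 := by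
      intro x; simpa [norm_iteratedFDeriv_zero] using hC1 x
    apply Integrable.mono' ((ψ.integrable (μ := volume)).norm.const_mul C1)
      ((ψ.continuous.norm.pow 2).aestronglyMeasurable)
    filter_upwards with x
    have h2 : (0:ℝ) ≤ ‖ψ x‖ := norm_nonneg _
    simp only [Pi.pow_apply]
    rw [Real.norm_eq_abs, _root_.abs_of_nonneg (by positivity : (0:ℝ) ≤ ‖ψ x‖^2), sq]
    exact mul_le_mul_of_nonneg_right (hC1' x) h2
  rw [← MeasureTheory.setIntegral_univ (f := fun x : ℝ => ‖ψ x‖^2),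
    ← iUnion_Ioc_intCast (α := ℝ)]
  exact (integral_iUnion (fun k : ℤ => measurableSet_Ioc) (pairwise_disjoint_Ioc_intCast ℝ)
    (by rw [iUnion_Ioc_intCast]; exact hψint.integrableOn)).symm
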